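/- If n − t > 0, then the chromatic number of the shuriken graph Shu^t_n(G) is at least max{|V(G)| + 1, 2χ(G)}, where χ(G) is the chromatic number of G. -/

import Mathlib

open SimpleGraph

/-- The (t,n)-shuriken graph of `G`: vertices are `n` copies of `V(G) ∪ {z}`,
encoded as `Fin n × Option V` (`(i, some x)` is `x_{i+1}`, `(i, none)` is `z_{i+1}`).
Adjacency (symmetrized, loops removed by `fromRel`):
(1) `u_i v_j` whenever `uv ∈ E(G)` (any copies);
(2) all pairs within copy `i` for `i ≤ t` (copy made complete);
(3) all pairs between copy `i` and copy `n+t+1-i` for `t+1 ≤ i ≤ (n+t)/2`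
    (0-indexed: `i + j = n + t - 1` with `t ≤ i`). -/
def shuriken {V : Type*} (G : SimpleGraph V) (n t : ℕ) :
    SimpleGraph (Fin n × Option V) :=
  SimpleGraph.fromRel (fun p q =>
    (∃ x y, p.2 = some x ∧ q.2 = some y ∧ G.Adj x y) ∨
    (p.1 = q.1 ∧ (p.1 : ℕ) < t) ∨
    (t ≤ (p.1 : ℕ) ∧ (p.1 : ℕ) + (q.1 : ℕ) = n + t - 1))

theorem shuriken_chromaticNumber_lower_bound {V : Type*} [Fintype V] (G : SimpleGraph V)
    (n t : ℕ) (ht : 1 ≤ t) (htn : t < n) (hev : Even (n - t)) :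
    max ((Fintype.card V : ℕ∞) + 1) (2 * G.chromaticNumber) ≤
      (shuriken G n t).chromaticNumber := by
  classical
  have hn1 : 1 ≤ n := le_trans ht htn.le
  obtain ⟨m, hm⟩ := hev
  have htn1 : t ≠ n - 1 := by omega
  rw [SimpleGraph.chromaticNumber]
  refine le_iInf₂ fun k hk => ?_
  obtain ⟨C⟩ := hk
  set it : Fin n := ⟨t, htn⟩ with hit
  set in1 : Fin n := ⟨n - 1, by omega⟩ with hin1
  have hcross : ∀ u v : V, (shuriken G n t).Adj (it, some u) (in1, some v) := by
    intro u v
    rw [shuriken, fromRel_adj]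
    refine ⟨?_, Or.inl (Or.inr (Or.inr ⟨le_refl t, by simp [hit, hin1]; omega⟩))⟩
    intro h
    exact htn1 (by simpa [hit, hin1, Fin.ext_iff] using congrArg (fun p => (p.1 : ℕ)) h)
  have hwithin : ∀ (i : Fin n) (u v : V), G.Adj u v →
      (shuriken G n t).Adj (i, some u) (i, some v) := by
    intro i u v huv
    rw [shuriken, fromRel_adj]
    exact ⟨by simp [huv.ne], Or.inl (Or.inl ⟨u, v, rfl, rfl, huv⟩)⟩
  refine max_le ?_ ?_
  · -- clique on copy 0
    have hinj : Function.Injective (fun a : Option V => C (⟨0, by omega⟩, a)) := by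
      intro a b hab
      by_contra hne
      refine C.valid ?_ hab
      rw [shuriken, fromRel_adj]
      exact ⟨by simp [hne], Or.inl (Or.inr (Or.inl ⟨rfl, by simp; omega⟩))⟩
    have hle := Fintype.card_le_of_injective _ hinj
    rw [Fintype.card_option, Fintype.card_fin] at hle
    exact_mod_cast hle
  · set A : Finset (Fin k) := Finset.image (fun v => C (it, some v)) Finset.univ with hA
    set B : Finset (Fin k) := Finset.image (fun v => C (in1, some v)) Finset.univ with hB
    have hdisj : Disjoint A B := by
      rw [Finset.disjoint_left]
      rintro a ha hb
      simp only [hA, hB, Finset.mem_image] at ha hb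
      obtain ⟨u, -, hu⟩ := ha
      obtain ⟨v, -, hv⟩ := hb
      exact C.valid (hcross u v) (hu.trans hv.symm)
    have hcA : G.chromaticNumber ≤ (A.card : ℕ∞) := by
      have CA : G.Coloring ↥A := Coloring.mk
        (fun v => ⟨C (it, some v), Finset.mem_image_of_mem _ (Finset.mem_univ v)⟩)
        (fun {u v} huv h => C.valid (hwithin it u v huv) (congrArg Subtype.val h))
      have := CA.colorable
      rw [Fintype.card_coe] at this
      exact this.chromaticNumber_le
    have hcB : G.chromaticNumber ≤ (B.card : ℕ∞) := by
      have CB : G.Coloring ↥B := Coloring.mk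
        (fun v => ⟨C (in1, some v), Finset.mem_image_of_mem _ (Finset.mem_univ v)⟩)
        (fun {u v} huv h => C.valid (hwithin in1 u v huv) (congrArg Subtype.val h))
      have := CB.colorable
      rw [Fintype.card_coe] at this
      exact this.chromaticNumber_le
    have hcard : A.card + B.card ≤ k := by
      rw [← Finset.card_union_of_disjoint hdisj]
      simpa using Finset.card_le_univ (A ∪ B)
    calc 2 * G.chromaticNumber = G.chromaticNumber + G.chromaticNumber := two_mul _
      _ ≤ (A.card : ℕ∞) + (B.card : ℕ∞) := add_le_add hcA hcB
      _ = ((A.card + B.card : ℕ) : ℕ∞) := by push_cast; ring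
      _ ≤ (k : ℕ∞) := by exact_mod_cast hcard
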